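/- For all q ≥ 0, P > 0, 0 < Λ ≤ Λ₀, and every natural number k, there exists C_k > 0 such that ∫_Λ^{Λ₀} (log₊(P/λ))^k / (λ+q) dλ < C_k (1 + (log₊(P/(Λ+q)))^{k+1} + log₊(Λ₀/(Λ+q))). -/

import Mathlib

noncomputable def logPlus (x : ℝ) : ℝ := Real.log (max 1 x)



lemma logPlus_nonneg (x : ℝ) : 0 ≤ logPlus x :=
  Real.log_nonneg (le_max_left 1 x)

lemma logPlus_of_one_le {x : ℝ} (h : 1 ≤ x) : logPlus x = Real.log x := by
  rw [logPlus, max_eq_right h]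

lemma logPlus_of_le_one {x : ℝ} (h : x ≤ 1) : logPlus x = 0 := by
  rw [logPlus, max_eq_left h, Real.log_one]

lemma logPlus_mul_le {x y : ℝ} (hx : 0 ≤ x) (hy : 0 ≤ y) :
    logPlus (x * y) ≤ logPlus x + logPlus y := by
  have h1 : (1:ℝ) ≤ max 1 x := le_max_left _ _
  have h2 : (1:ℝ) ≤ max 1 y := le_max_left _ _
  have hle : max 1 (x*y) ≤ max 1 x * max 1 y := by
    apply max_le
    · nlinarith
    · exact mul_le_mul (le_max_right _ _) (le_max_right _ _) hy (by linarith)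
  calc logPlus (x*y) = Real.log (max 1 (x*y)) := rfl
    _ ≤ Real.log (max 1 x * max 1 y) := Real.log_le_log (by positivity) hle
    _ = logPlus x + logPlus y := Real.log_mul (by positivity) (by positivity)

lemma continuous_logPlus : Continuous logPlus := by
  have : Continuous fun x : ℝ => max 1 x := continuous_const.max continuous_id
  exact Real.continuousOn_log.comp_continuous this (fun x => by
    simp only [Set.mem_compl_iff, Set.mem_singleton_iff]
    have : (1:ℝ) ≤ max 1 x := le_max_left _ _
    intro h; rw [h] at this; linarith)

lemma logPlus_mono {x y : ℝ} (h : x ≤ y) : logPlus x ≤ logPlus y :=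
  Real.log_le_log (by positivity) (max_le_max le_rfl h)

lemma add_pow_le' (k : ℕ) {a b : ℝ} (ha : 0 ≤ a) (hb : 0 ≤ b) :
    (a + b) ^ k ≤ 2 ^ k * (a ^ k + b ^ k) := by
  have h : a + b ≤ 2 * max a b := by
    rcases max_cases a b with ⟨h1,h2⟩|⟨h1,h2⟩ <;> rw [h1] <;> linarith
  calc (a+b)^k ≤ (2 * max a b)^k := pow_le_pow_left₀ (by positivity) h k
    _ = 2^k * (max a b)^k := mul_pow 2 _ k
    _ ≤ 2^k * (a^k + b^k) := by
        apply mul_le_mul_of_nonneg_left _ (by positivity)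
        rcases max_cases a b with ⟨h1,h2⟩|⟨h1,h2⟩ <;> rw [h1] <;> nlinarith [pow_nonneg ha k, pow_nonneg hb k]

lemma loglem (K : ℕ) (hK : 1 ≤ K) {t : ℝ} (ht : 0 ≤ t) :
    Real.log (1 + t) ^ K ≤ Real.sqrt 2 * (2*K)^K * Real.sqrt t := by
  have hl0 : 0 ≤ Real.log (1+t) := Real.log_nonneg (by linarith)
  have hck : (1:ℝ) ≤ Real.sqrt 2 * (2*K)^K := by
    have h2 : (1:ℝ) ≤ Real.sqrt 2 := by
      rw [show (1:ℝ) = Real.sqrt 1 by simp]; exact Real.sqrt_le_sqrt (by norm_num)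
    have h1K : (1:ℝ) ≤ 2*(K:ℝ) := by
      have : (1:ℝ) ≤ (K:ℝ) := by exact_mod_cast hK
      linarith
    have h3 : (1:ℝ) ≤ (2*(K:ℝ))^K := one_le_pow₀ h1K
    nlinarith
  rcases le_total t 1 with h|h
  · -- log(1+t) ≤ t, t^K ≤ t ≤ √t
    have h1 : Real.log (1+t) ≤ t := by
      have := Real.log_le_sub_one_of_pos (show (0:ℝ) < 1 + t by linarith)
      linarith
    have h2 : Real.log (1+t) ^ K ≤ t ^ K := pow_le_pow_left₀ hl0 h1 K
    have h3 : t ^ K ≤ t := by simpa using pow_le_pow_of_le_one ht h hK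
    have h4 : t ≤ Real.sqrt t := by
      nlinarith [Real.sq_sqrt ht, Real.sqrt_nonneg t, Real.sqrt_le_sqrt h,
        Real.sqrt_one]
    have h5 : Real.sqrt t ≤ Real.sqrt 2 * (2*K)^K * Real.sqrt t := by
      nlinarith [Real.sqrt_nonneg t]
    linarith
  · -- t ≥ 1
    have hKR : (0:ℝ) < 2*(K:ℝ) := by positivity
    have h1t : (0:ℝ) < 1 + t := by linarith
    set e : ℝ := (2*(K:ℝ))⁻¹ with he
    have hlog : Real.log (1+t) = 2*K * Real.log ((1+t) ^ e) := by
      rw [Real.log_rpow h1t, he]; field_simp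
    have h2 : Real.log ((1+t)^e) ≤ (1+t)^e := by
      have := Real.log_le_sub_one_of_pos (Real.rpow_pos_of_pos h1t e)
      linarith
    have h3 : Real.log (1+t) ≤ 2*K * (1+t)^e := by
      rw [hlog]
      exact mul_le_mul_of_nonneg_left h2 (by positivity)
    have h4 : Real.log (1+t) ^ K ≤ (2*(K:ℝ))^K * ((1+t)^e)^K := by
      calc Real.log (1+t) ^ K ≤ (2*K * (1+t)^e)^K := pow_le_pow_left₀ hl0 h3 K
        _ = (2*(K:ℝ))^K * ((1+t)^e)^K := mul_pow _ _ K
    have h5 : (((1+t):ℝ)^e) ^ K = (1+t) ^ ((2:ℝ))⁻¹ := by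
      rw [← Real.rpow_natCast ((1+t)^e) K, ← Real.rpow_mul (le_of_lt h1t)]
      have hK0 : (K:ℝ) ≠ 0 := Nat.cast_ne_zero.mpr (by omega)
      congr 1
      rw [he]
      field_simp
    have h6 : ((1+t):ℝ) ^ ((2:ℝ))⁻¹ = Real.sqrt (1+t) := by
      rw [Real.sqrt_eq_rpow]; norm_num
    have h7 : Real.sqrt (1+t) ≤ Real.sqrt 2 * Real.sqrt t := by
      rw [← Real.sqrt_mul (by norm_num)]
      apply Real.sqrt_le_sqrt; linarith
    calc Real.log (1+t)^K ≤ (2*(K:ℝ))^K * ((1+t)^e)^K := h4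
      _ = (2*(K:ℝ))^K * Real.sqrt (1+t) := by rw [h5, h6]
      _ ≤ (2*(K:ℝ))^K * (Real.sqrt 2 * Real.sqrt t) := mul_le_mul_of_nonneg_left h7 (by positivity)
      _ = Real.sqrt 2 * (2*(K:ℝ))^K * Real.sqrt t := by ring



lemma uIcc_sub {a b : ℝ} (ha : 0 < a) (hb : 0 < b) : Set.uIcc a b ⊆ Set.Ioi (0:ℝ) := by
  intro x hx
  rcases Set.mem_uIcc.mp hx with ⟨h1,_⟩|⟨h1,_⟩ <;> exact Set.mem_Ioi.mpr (by linarith)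

lemma II {a b q : ℝ} (ha : 0 < a) (hb : 0 < b) (hq : 0 ≤ q) (f : ℝ → ℝ)
    (hf : ContinuousOn f (Set.Ioi 0)) :
    IntervalIntegrable (fun x => f x / (x + q)) MeasureTheory.volume a b := by
  apply ContinuousOn.intervalIntegrable
  have hsub := uIcc_sub ha hb
  apply ContinuousOn.div
  · exact hf.mono hsub
  · fun_prop
  · intro x hx
    have hx0 : 0 < x := hsub hx
    exact ne_of_gt (by linarith)

lemma contOn_f2 (P q : ℝ) (hq : 0 ≤ q) (K : ℕ) :
    ContinuousOn (fun x : ℝ => logPlus (P/(x+q)) ^ K) (Set.Ioi 0) := by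
  apply ContinuousOn.pow
  apply continuous_logPlus.comp_continuousOn
  apply ContinuousOn.div continuousOn_const (by fun_prop)
  intro x hx
  have : (0:ℝ) < x := hx
  exact ne_of_gt (by linarith)

lemma contOn_psi1 (P q : ℝ) (hq : 0 ≤ q) (K : ℕ) :
    ContinuousOn (fun x : ℝ => (Real.log P - Real.log (x+q)) ^ K) (Set.Ioi 0) := by
  apply ContinuousOn.pow
  apply ContinuousOn.sub continuousOn_const
  apply ContinuousOn.log (by fun_prop)
  intro x hx
  have : (0:ℝ) < x := hx
  exact ne_of_gt (by linarith)

lemma I1bound (n : ℕ) (q P Λ Λ₀ : ℝ) (hq : 0 ≤ q) (hP : 0 < P) (hΛ : 0 < Λ)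
    (hΛΛ₀ : Λ ≤ Λ₀) :
    (∫ l in Λ..Λ₀, logPlus (P/(l+q)) ^ (n+1) / (l+q)) ≤ logPlus (P/(Λ+q)) ^ (n+2) := by
  set K := n + 1 with hKdef
  have ha : 0 < Λ + q := by linarith
  have hΛ₀0 : 0 < Λ₀ := lt_of_lt_of_le hΛ hΛΛ₀
  by_cases hPa : P ≤ Λ + q
  · have heq : Set.EqOn (fun l => logPlus (P/(l+q)) ^ K / (l+q)) 0 (Set.uIcc Λ Λ₀) := by
      intro x hx
      rw [Set.uIcc_of_le hΛΛ₀] at hx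
      have hx0 : 0 < x + q := by linarith [hx.1]
      have h1 : P/(x+q) ≤ 1 := (div_le_one hx0).mpr (le_trans hPa (by linarith [hx.1]))
      simp [logPlus_of_le_one h1, zero_pow (by omega : K ≠ 0)]
    rw [intervalIntegral.integral_congr heq]
    simp only [Pi.zero_apply, intervalIntegral.integral_zero]
    exact pow_nonneg (logPlus_nonneg _) _
  · push_neg at hPa
    set c := min Λ₀ (P - q) with hc
    have hΛc : Λ ≤ c := le_min hΛΛ₀ (by linarith)
    have hcΛ₀ : c ≤ Λ₀ := min_le_left _ _
    have hc0 : 0 < c := lt_of_lt_of_le hΛ hΛc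
    have hcP : c + q ≤ P := by
      have := min_le_right Λ₀ (P - q); linarith
    have hint : IntervalIntegrable (fun l => logPlus (P/(l+q)) ^ K / (l+q))
        MeasureTheory.volume Λ Λ₀ := II hΛ hΛ₀0 hq _ (contOn_f2 P q hq K)
    have hint1 : IntervalIntegrable (fun l => logPlus (P/(l+q)) ^ K / (l+q))
        MeasureTheory.volume Λ c := II hΛ hc0 hq _ (contOn_f2 P q hq K)
    have hint2 : IntervalIntegrable (fun l => logPlus (P/(l+q)) ^ K / (l+q))
        MeasureTheory.volume c Λ₀ := II hc0 hΛ₀0 hq _ (contOn_f2 P q hq K)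
    have hsplit : (∫ l in Λ..Λ₀, logPlus (P/(l+q)) ^ K / (l+q))
        = (∫ l in Λ..c, logPlus (P/(l+q)) ^ K / (l+q))
          + (∫ l in c..Λ₀, logPlus (P/(l+q)) ^ K / (l+q)) :=
      (intervalIntegral.integral_add_adjacent_intervals hint1 hint2).symm
    have hsecond : (∫ l in c..Λ₀, logPlus (P/(l+q)) ^ K / (l+q)) = 0 := by
      rcases le_total (P - q) Λ₀ with h|h
      · have hceq : c = P - q := min_eq_right h
        have heq : Set.EqOn (fun l => logPlus (P/(l+q)) ^ K / (l+q)) 0 (Set.uIcc c Λ₀) := by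
          intro x hx
          rw [Set.uIcc_of_le hcΛ₀] at hx
          have hx0 : 0 < x + q := by linarith [hx.1, hc0]
          have h1 : P/(x+q) ≤ 1 := (div_le_one hx0).mpr (by
            have := hx.1; rw [hceq] at this; linarith)
          simp [logPlus_of_le_one h1, zero_pow (by omega : K ≠ 0)]
        rw [intervalIntegral.integral_congr heq]
        simp only [Pi.zero_apply, intervalIntegral.integral_zero]
      · have hceq : c = Λ₀ := min_eq_left h
        rw [hceq, intervalIntegral.integral_same]
    -- FTC on [Λ, c]
    set G : ℝ → ℝ := fun l => -((Real.log P - Real.log (l+q)) ^ (K+1)) / ((K:ℝ)+1) with hG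
    have hderiv : ∀ x ∈ Set.uIcc Λ c,
        HasDerivAt G ((Real.log P - Real.log (x+q)) ^ K / (x+q)) x := by
      intro x hx
      have hx0 : 0 < x + q := by
        have := uIcc_sub hΛ hc0 hx; simp at this; linarith
      have d1 : HasDerivAt (fun l : ℝ => l + q) 1 x := (hasDerivAt_id x).add_const q
      have d2 : HasDerivAt (fun l : ℝ => Real.log (l+q)) (1/(x+q)) x := by
        have := d1.log (ne_of_gt hx0)
        simpa using this
      have d3 : HasDerivAt (fun l : ℝ => Real.log P - Real.log (l+q)) (-(1/(x+q))) x :=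
        d2.const_sub _
      have d4 := (d3.pow (K+1)).neg.div_const ((K:ℝ)+1)
      refine d4.congr_deriv ?_
      have hKne : ((K:ℝ)+1) ≠ 0 := by positivity
      have hxne : (x+q) ≠ 0 := ne_of_gt hx0
      push_cast
      field_simp
    have hiψ : IntervalIntegrable (fun x => (Real.log P - Real.log (x+q)) ^ K / (x+q))
        MeasureTheory.volume Λ c := II hΛ hc0 hq _ (contOn_psi1 P q hq K)
    have hftc := intervalIntegral.integral_eq_sub_of_hasDerivAt hderiv hiψ
    have hcongr : (∫ l in Λ..c, logPlus (P/(l+q)) ^ K / (l+q))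
        = (∫ l in Λ..c, (Real.log P - Real.log (l+q)) ^ K / (l+q)) := by
      apply intervalIntegral.integral_congr
      intro x hx
      rw [Set.uIcc_of_le hΛc] at hx
      have hx0 : 0 < x + q := by linarith [hx.1]
      have h1 : 1 ≤ P/(x+q) := (one_le_div hx0).mpr (by linarith [hx.2])
      simp only
      rw [logPlus_of_one_le h1, Real.log_div (ne_of_gt hP) (ne_of_gt hx0)]
    have hlogc : 0 ≤ Real.log P - Real.log (c+q) := by
      have : Real.log (c+q) ≤ Real.log P := Real.log_le_log (by linarith) hcP
      linarith
    have hlogΛ : 0 ≤ Real.log P - Real.log (Λ+q) := by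
      have : Real.log (Λ+q) ≤ Real.log P := Real.log_le_log ha (le_of_lt hPa)
      linarith
    have hval : (∫ l in Λ..c, (Real.log P - Real.log (l+q)) ^ K / (l+q))
        ≤ (Real.log P - Real.log (Λ+q)) ^ (K+1) := by
      rw [hftc, hG]
      simp only
      set pc := (Real.log P - Real.log (c+q)) ^ (K+1) with hpc
      set pΛ := (Real.log P - Real.log (Λ+q)) ^ (K+1) with hpΛ
      have h1 : 0 ≤ (Real.log P - Real.log (c+q)) ^ (K+1) := by positivity
      have h2 : (Real.log P - Real.log (Λ+q)) ^ (K+1) / ((K:ℝ)+1)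
          ≤ (Real.log P - Real.log (Λ+q)) ^ (K+1) := by
        apply div_le_self (by positivity)
        have : (0:ℝ) ≤ (K:ℝ) := Nat.cast_nonneg K
        linarith
      have hKpos : (0:ℝ) < (K:ℝ)+1 := by positivity
      have e1 : -pc/((K:ℝ)+1) - -pΛ/((K:ℝ)+1) = (pΛ - pc)/((K:ℝ)+1) := by ring
      rw [e1]
      have h4 : (pΛ - pc)/((K:ℝ)+1) ≤ pΛ/((K:ℝ)+1) :=
        (div_le_div_iff_of_pos_right hKpos).mpr (by linarith [h1])
      linarith [h2, h4]
    have hA : logPlus (P/(Λ+q)) = Real.log P - Real.log (Λ+q) := by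
      rw [logPlus_of_one_le ((one_le_div ha).mpr (le_of_lt hPa)),
        Real.log_div (ne_of_gt hP) (ne_of_gt ha)]
    rw [hsplit, hsecond, hcongr, add_zero, hA]
    have : K + 1 = n + 2 := by omega
    rw [← this]
    exact hval



lemma contOn_f3 (q : ℝ) (hq : 0 ≤ q) (K : ℕ) :
    ContinuousOn (fun x : ℝ => Real.log ((x+q)/x) ^ K) (Set.Ioi 0) := by
  apply ContinuousOn.pow
  apply ContinuousOn.log
  · apply ContinuousOn.div (by fun_prop) (by fun_prop)
    intro x hx; exact ne_of_gt hx
  · intro x hx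
    have hx0 : (0:ℝ) < x := hx
    have : (0:ℝ) < (x+q)/x := by positivity
    exact ne_of_gt this

lemma I2bound (n : ℕ) (q P Λ Λ₀ : ℝ) (hq : 0 ≤ q) (hP : 0 < P) (hΛ : 0 < Λ)
    (hΛΛ₀ : Λ ≤ Λ₀) :
    (∫ l in Λ..Λ₀, Real.log ((l+q)/l) ^ (n+1) / (l+q))
      ≤ 2 * (Real.sqrt 2 * (2*(n+1):ℝ)^(n+1)) + 1 := by
  set K := n + 1 with hKdef
  have hK1 : 1 ≤ K := by omega
  set ck : ℝ := Real.sqrt 2 * (2*(K:ℝ))^K with hckdef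
  have hck0 : 0 ≤ ck := by positivity
  have hΛ₀0 : 0 < Λ₀ := lt_of_lt_of_le hΛ hΛΛ₀
  set m := min Λ₀ (max Λ q) with hm
  have hΛm : Λ ≤ m := le_min hΛΛ₀ (le_max_left _ _)
  have hmΛ₀ : m ≤ Λ₀ := min_le_left _ _
  have hm0 : 0 < m := lt_of_lt_of_le hΛ hΛm
  have hint1 : IntervalIntegrable (fun l => Real.log ((l+q)/l) ^ K / (l+q))
      MeasureTheory.volume Λ m := II hΛ hm0 hq _ (contOn_f3 q hq K)
  have hint2 : IntervalIntegrable (fun l => Real.log ((l+q)/l) ^ K / (l+q))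
      MeasureTheory.volume m Λ₀ := II hm0 hΛ₀0 hq _ (contOn_f3 q hq K)
  have hsplit : (∫ l in Λ..Λ₀, Real.log ((l+q)/l) ^ K / (l+q))
      = (∫ l in Λ..m, Real.log ((l+q)/l) ^ K / (l+q))
        + (∫ l in m..Λ₀, Real.log ((l+q)/l) ^ K / (l+q)) :=
    (intervalIntegral.integral_add_adjacent_intervals hint1 hint2).symm
  have hpiece1 : (∫ l in Λ..m, Real.log ((l+q)/l) ^ K / (l+q)) ≤ 2 * ck := by
    rcases le_or_gt q Λ with h|h
    · have hmeq : m = Λ := by rw [hm, max_eq_left h, min_eq_right hΛΛ₀]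
      rw [hmeq, intervalIntegral.integral_same]
      positivity
    · have hq0 : 0 < q := lt_trans hΛ h
      have hsq : (0:ℝ) < Real.sqrt q := Real.sqrt_pos.mpr hq0
      have hmq : m ≤ q := by
        rw [hm, max_eq_right h.le]; exact min_le_right _ _
      -- comparison function S and its derivative
      set S : ℝ → ℝ := fun x => ck * Real.sqrt q / q * (2 * Real.sqrt x) with hS
      have hderiv : ∀ x ∈ Set.uIcc Λ m,
          HasDerivAt S (ck * Real.sqrt q / q * (1 / Real.sqrt x)) x := by
        intro x hx
        have hx0 : 0 < x := uIcc_sub hΛ hm0 hx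
        have d1 := (Real.hasDerivAt_sqrt (ne_of_gt hx0)).const_mul (2:ℝ)
        have d2 := d1.const_mul (ck * Real.sqrt q / q)
        refine d2.congr_deriv ?_
        have : Real.sqrt x ≠ 0 := ne_of_gt (Real.sqrt_pos.mpr hx0)
        field_simp
      have hiψ : IntervalIntegrable (fun x => ck * Real.sqrt q / q * (1 / Real.sqrt x))
          MeasureTheory.volume Λ m := by
        apply ContinuousOn.intervalIntegrable
        apply ContinuousOn.mul continuousOn_const
        apply ContinuousOn.div continuousOn_const Real.continuous_sqrt.continuousOn
        intro x hx
        exact ne_of_gt (Real.sqrt_pos.mpr (uIcc_sub hΛ hm0 hx))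
      have hmono : (∫ l in Λ..m, Real.log ((l+q)/l) ^ K / (l+q))
          ≤ ∫ l in Λ..m, ck * Real.sqrt q / q * (1 / Real.sqrt l) := by
        apply intervalIntegral.integral_mono_on hΛm hint1 hiψ
        intro x hx
        have hx0 : 0 < x := lt_of_lt_of_le hΛ hx.1
        have hxq : x ≤ q := le_trans hx.2 hmq
        have h1 : (x+q)/x = 1 + q/x := by field_simp
        have h2 : Real.log ((x+q)/x) ^ K ≤ ck * Real.sqrt (q/x) := by
          rw [h1, hckdef]; exact loglem K hK1 (by positivity)
        have h3 : Real.sqrt (q/x) = Real.sqrt q / Real.sqrt x := by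
          rw [Real.sqrt_div hq0.le]
        have h4 : Real.log ((x+q)/x) ^ K / (x+q) ≤ ck * (Real.sqrt q / Real.sqrt x) / (x+q) := by
          apply div_le_div_of_nonneg_right ?_ (by linarith) |>.trans_eq rfl
          · rw [← h3]; exact h2
        have h5 : ck * (Real.sqrt q / Real.sqrt x) / (x+q) ≤ ck * (Real.sqrt q / Real.sqrt x) / q := by
          apply div_le_div_of_nonneg_left (by positivity) hq0 (by linarith)
        have h6 : ck * (Real.sqrt q / Real.sqrt x) / q = ck * Real.sqrt q / q * (1 / Real.sqrt x) := by
          ring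
        linarith [h4, h5, h6 ▸ h5]
      have hftc := intervalIntegral.integral_eq_sub_of_hasDerivAt hderiv hiψ
      have hSm : S m - S Λ ≤ 2 * ck := by
        rw [hS]
        simp only
        have h7 : Real.sqrt m ≤ Real.sqrt q := Real.sqrt_le_sqrt hmq
        have h8 : 0 ≤ Real.sqrt Λ := Real.sqrt_nonneg Λ
        have h9 : ck * Real.sqrt q / q * (2 * Real.sqrt m) ≤ ck * Real.sqrt q / q * (2 * Real.sqrt q) := by
          apply mul_le_mul_of_nonneg_left (by linarith) (by positivity)
        have h10 : ck * Real.sqrt q / q * (2 * Real.sqrt q) = 2 * ck * (Real.sqrt q * Real.sqrt q) / q := by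
          ring
        have h11 : Real.sqrt q * Real.sqrt q = q := Real.mul_self_sqrt hq0.le
        have h12 : ck * Real.sqrt q / q * (2 * Real.sqrt q) = 2 * ck := by
          rw [h10, h11]; field_simp
        have h13 : 0 ≤ ck * Real.sqrt q / q * (2 * Real.sqrt Λ) := by positivity
        linarith
      calc (∫ l in Λ..m, Real.log ((l+q)/l) ^ K / (l+q))
          ≤ ∫ l in Λ..m, ck * Real.sqrt q / q * (1 / Real.sqrt l) := hmono
        _ = S m - S Λ := hftc
        _ ≤ 2 * ck := hSm
  have hpiece2 : (∫ l in m..Λ₀, Real.log ((l+q)/l) ^ K / (l+q)) ≤ 1 := by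
    rcases le_or_gt q Λ₀ with h|h
    · have hqm : q ≤ m := le_min h (le_max_right _ _)
      -- comparison function T
      set T : ℝ → ℝ := fun x => -(q^K/(K:ℝ)) * (x^K)⁻¹ with hT
      have hderiv : ∀ x ∈ Set.uIcc m Λ₀,
          HasDerivAt T (q^K / x^(K+1)) x := by
        intro x hx
        have hx0 : 0 < x := uIcc_sub hm0 hΛ₀0 hx
        have hxK : (x:ℝ)^K ≠ 0 := pow_ne_zero _ (ne_of_gt hx0)
        have d1 : HasDerivAt (fun y : ℝ => (y^K)⁻¹) (-((K:ℝ) * x^(K-1)) / (x^K)^2) x :=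
          (hasDerivAt_pow K x).inv hxK
        have d2 := d1.const_mul (-(q^K/(K:ℝ)))
        refine d2.congr_deriv ?_
        have hKne : ((K:ℝ)) ≠ 0 := Nat.cast_ne_zero.mpr (by omega)
        have hxne : x ≠ 0 := ne_of_gt hx0
        rw [hKdef]
        simp only [Nat.add_sub_cancel]
        push_cast
        field_simp
        ring
      have hiψ : IntervalIntegrable (fun x => q^K / x^(K+1)) MeasureTheory.volume m Λ₀ := by
        apply ContinuousOn.intervalIntegrable
        apply ContinuousOn.div continuousOn_const (by fun_prop)
        intro x hx
        exact pow_ne_zero _ (ne_of_gt (uIcc_sub hm0 hΛ₀0 hx))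
      have hmono : (∫ l in m..Λ₀, Real.log ((l+q)/l) ^ K / (l+q))
          ≤ ∫ l in m..Λ₀, q^K / l^(K+1) := by
        apply intervalIntegral.integral_mono_on hmΛ₀ hint2 hiψ
        intro x hx
        have hx0 : 0 < x := lt_of_lt_of_le hm0 hx.1
        have hqx : q ≤ x := le_trans hqm hx.1
        have h1 : (x+q)/x = 1 + q/x := by field_simp
        have hl0 : 0 ≤ Real.log ((x+q)/x) := Real.log_nonneg (by rw [h1]; nlinarith [div_nonneg hq hx0.le])
        have h2 : Real.log ((x+q)/x) ≤ q/x := by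
          rw [h1]
          have := Real.log_le_sub_one_of_pos (show (0:ℝ) < 1 + q/x by positivity)
          linarith
        have h3 : Real.log ((x+q)/x) ^ K ≤ (q/x)^K := pow_le_pow_left₀ hl0 h2 K
        have h4 : Real.log ((x+q)/x) ^ K / (x+q) ≤ (q/x)^K / (x+q) :=
          div_le_div_of_nonneg_right h3 (by linarith) |>.trans_eq rfl
        have h5 : (q/x)^K / (x+q) ≤ (q/x)^K / x :=
          div_le_div_of_nonneg_left (by positivity) hx0 (by linarith)
        have h6 : (q/x)^K / x = q^K / x^(K+1) := by
          rw [div_pow, div_div, ← pow_succ]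
        linarith [h6 ▸ h5]
      have hftc := intervalIntegral.integral_eq_sub_of_hasDerivAt hderiv hiψ
      have hTv : T Λ₀ - T m ≤ 1 := by
        rw [hT]
        simp only
        have hKpos : (0:ℝ) < (K:ℝ) := by positivity
        have hqK : q^K ≤ m^K := pow_le_pow_left₀ hq hqm K
        have hmK : (0:ℝ) < m^K := by positivity
        have hΛ₀K : (0:ℝ) < Λ₀^K := by positivity
        have e1 : -(q^K/(K:ℝ)) * (Λ₀^K)⁻¹ - -(q^K/(K:ℝ)) * (m^K)⁻¹
            = q^K/(K:ℝ) * ((m^K)⁻¹ - (Λ₀^K)⁻¹) := by ring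
        rw [e1]
        have h7 : q^K/(K:ℝ) * ((m^K)⁻¹ - (Λ₀^K)⁻¹) ≤ q^K/(K:ℝ) * (m^K)⁻¹ := by
          apply mul_le_mul_of_nonneg_left _ (by positivity)
          have : (0:ℝ) < (Λ₀^K)⁻¹ := by positivity
          linarith
        have h8 : q^K/(K:ℝ) * (m^K)⁻¹ ≤ 1 := by
          have h9 : q^K * (m^K)⁻¹ ≤ 1 := by
            rw [← div_eq_mul_inv]
            exact (div_le_one hmK).mpr hqK
          have hK1' : (1:ℝ) ≤ (K:ℝ) := by exact_mod_cast hK1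
          calc q^K/(K:ℝ) * (m^K)⁻¹ = (q^K * (m^K)⁻¹) / (K:ℝ) := by ring
            _ ≤ 1 / (K:ℝ) := by gcongr
            _ ≤ 1 := by rw [div_le_one hKpos]; exact hK1'
        linarith
      calc (∫ l in m..Λ₀, Real.log ((l+q)/l) ^ K / (l+q))
          ≤ ∫ l in m..Λ₀, q^K / l^(K+1) := hmono
        _ = T Λ₀ - T m := hftc
        _ ≤ 1 := hTv
    · have hmeq : m = Λ₀ := by
        rw [hm, max_eq_right (by linarith : Λ ≤ q), min_eq_left h.le]
      rw [hmeq, intervalIntegral.integral_same]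
      norm_num
  calc (∫ l in Λ..Λ₀, Real.log ((l+q)/l) ^ (n+1) / (l+q))
      ≤ 2 * ck + 1 := by rw [hsplit]; exact add_le_add hpiece1 hpiece2
    _ = 2 * (Real.sqrt 2 * (2*(n+1):ℝ)^(n+1)) + 1 := by
        simp only [hckdef, hKdef]
        push_cast
        ring



lemma contOn_f1 (P q : ℝ) (hq : 0 ≤ q) (K : ℕ) :
    ContinuousOn (fun x : ℝ => logPlus (P/x) ^ K) (Set.Ioi 0) := by
  apply ContinuousOn.pow
  apply continuous_logPlus.comp_continuousOn
  apply ContinuousOn.div continuousOn_const (by fun_prop)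
  intro x hx
  exact ne_of_gt hx

theorem stmt_8 (k : ℕ) :
    ∃ C : ℝ, 0 < C ∧ ∀ q P Λ Λ₀ : ℝ, 0 ≤ q → 0 < P → 0 < Λ → Λ ≤ Λ₀ →
      (∫ l in Λ..Λ₀, (logPlus (P / l)) ^ k / (l + q)) <
        C * (1 + (logPlus (P / (Λ + q))) ^ (k + 1) + logPlus (Λ₀ / (Λ + q))) := by
  rcases k with _ | n
  · -- k = 0
    refine ⟨1, one_pos, fun q P Λ Λ₀ hq hP hΛ hΛΛ₀ => ?_⟩
    have ha : 0 < Λ + q := by linarith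
    have hb : 0 < Λ₀ + q := by linarith
    have hΛ₀0 : 0 < Λ₀ := lt_of_lt_of_le hΛ hΛΛ₀
    have heval : (∫ l in Λ..Λ₀, (logPlus (P / l)) ^ 0 / (l + q))
        = Real.log (Λ₀ + q) - Real.log (Λ + q) := by
      have hderiv : ∀ x ∈ Set.uIcc Λ Λ₀,
          HasDerivAt (fun l : ℝ => Real.log (l+q)) ((logPlus (P/x)) ^ 0 / (x+q)) x := by
        intro x hx
        have hx0 : 0 < x := uIcc_sub hΛ hΛ₀0 hx
        have hxq : 0 < x + q := by linarith
        have d1 : HasDerivAt (fun l : ℝ => l + q) 1 x := (hasDerivAt_id x).add_const q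
        have d2 := d1.log (ne_of_gt hxq)
        simp only [pow_zero]
        simpa using d2
      have hi : IntervalIntegrable (fun l => (logPlus (P/l)) ^ 0 / (l+q))
          MeasureTheory.volume Λ Λ₀ := II hΛ hΛ₀0 hq _ (contOn_f1 P q hq 0)
      exact intervalIntegral.integral_eq_sub_of_hasDerivAt hderiv hi
    rw [heval]
    have hM : (1:ℝ) ≤ max 1 (Λ₀/(Λ+q)) := le_max_left _ _
    have h1 : (Λ₀+q)/(Λ+q) ≤ 2 * max 1 (Λ₀/(Λ+q)) := by
      have e1 : (Λ₀+q)/(Λ+q) = Λ₀/(Λ+q) + q/(Λ+q) := by ring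
      have e2 : Λ₀/(Λ+q) ≤ max 1 (Λ₀/(Λ+q)) := le_max_right _ _
      have e3 : q/(Λ+q) ≤ 1 := (div_le_one ha).mpr (by linarith)
      linarith
    have h2 : Real.log (Λ₀+q) - Real.log (Λ+q) = Real.log ((Λ₀+q)/(Λ+q)) :=
      (Real.log_div (ne_of_gt hb) (ne_of_gt ha)).symm
    have h3 : Real.log ((Λ₀+q)/(Λ+q)) ≤ Real.log (2 * max 1 (Λ₀/(Λ+q))) :=
      Real.log_le_log (by positivity) h1
    have h4 : Real.log (2 * max 1 (Λ₀/(Λ+q)))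
        = Real.log 2 + logPlus (Λ₀/(Λ+q)) := by
      rw [Real.log_mul (by norm_num) (ne_of_gt (lt_of_lt_of_le one_pos hM)), logPlus]
    have h5 : Real.log 2 < 1 := by
      have := Real.log_two_lt_d9; linarith
    have h6 : 0 ≤ logPlus (P/(Λ+q)) ^ (0+1) := pow_nonneg (logPlus_nonneg _) _
    rw [h2]
    nlinarith [h3, h4]
  · -- k = n+1
    set K := n + 1 with hKdef
    set ck : ℝ := Real.sqrt 2 * (2*((n:ℝ)+1))^(n+1) with hckdef
    have hck0 : 0 ≤ ck := by positivity
    have ht : (0:ℝ) < 2^K := by positivity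
    refine ⟨2^K * (2*ck + 2), by positivity, fun q P Λ Λ₀ hq hP hΛ hΛΛ₀ => ?_⟩
    have ha : 0 < Λ + q := by linarith
    have hΛ₀0 : 0 < Λ₀ := lt_of_lt_of_le hΛ hΛΛ₀
    -- integrabilities
    have hif : IntervalIntegrable (fun l => (logPlus (P/l)) ^ K / (l+q))
        MeasureTheory.volume Λ Λ₀ := II hΛ hΛ₀0 hq _ (contOn_f1 P q hq K)
    have hi1 : IntervalIntegrable (fun l => logPlus (P/(l+q)) ^ K / (l+q))
        MeasureTheory.volume Λ Λ₀ := II hΛ hΛ₀0 hq _ (contOn_f2 P q hq K)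
    have hi2 : IntervalIntegrable (fun l => Real.log ((l+q)/l) ^ K / (l+q))
        MeasureTheory.volume Λ Λ₀ := II hΛ hΛ₀0 hq _ (contOn_f3 q hq K)
    have hig : IntervalIntegrable
        (fun l => 2^K * (logPlus (P/(l+q)) ^ K / (l+q)) + 2^K * (Real.log ((l+q)/l) ^ K / (l+q)))
        MeasureTheory.volume Λ Λ₀ := (hi1.const_mul _).add (hi2.const_mul _)
    -- pointwise bound
    have hpt : ∀ x ∈ Set.Icc Λ Λ₀, (logPlus (P/x)) ^ K / (x+q)
        ≤ 2^K * (logPlus (P/(x+q)) ^ K / (x+q)) + 2^K * (Real.log ((x+q)/x) ^ K / (x+q)) := by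
      intro x hx
      have hx0 : 0 < x := lt_of_lt_of_le hΛ hx.1
      have hxq : 0 < x + q := by linarith
      have e1 : P/x = (P/(x+q)) * ((x+q)/x) := by field_simp
      have hr1 : (1:ℝ) ≤ (x+q)/x := (one_le_div hx0).mpr (by linarith)
      have h1 : logPlus (P/x) ≤ logPlus (P/(x+q)) + Real.log ((x+q)/x) := by
        rw [e1]
        calc logPlus ((P/(x+q)) * ((x+q)/x))
            ≤ logPlus (P/(x+q)) + logPlus ((x+q)/x) :=
              logPlus_mul_le (by positivity) (by positivity)
          _ = logPlus (P/(x+q)) + Real.log ((x+q)/x) := by rw [logPlus_of_one_le hr1]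
      have hb1 : 0 ≤ logPlus (P/(x+q)) := logPlus_nonneg _
      have hb2 : 0 ≤ Real.log ((x+q)/x) := Real.log_nonneg hr1
      have h2 : (logPlus (P/x)) ^ K ≤ (logPlus (P/(x+q)) + Real.log ((x+q)/x)) ^ K :=
        pow_le_pow_left₀ (logPlus_nonneg _) h1 K
      have h3 : (logPlus (P/(x+q)) + Real.log ((x+q)/x)) ^ K
          ≤ 2^K * (logPlus (P/(x+q)) ^ K + Real.log ((x+q)/x) ^ K) := add_pow_le' K hb1 hb2
      have h4 : (logPlus (P/x)) ^ K / (x+q)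
          ≤ 2^K * (logPlus (P/(x+q)) ^ K + Real.log ((x+q)/x) ^ K) / (x+q) :=
        div_le_div_of_nonneg_right (le_trans h2 h3) hxq.le |>.trans_eq rfl
      calc (logPlus (P/x)) ^ K / (x+q)
          ≤ 2^K * (logPlus (P/(x+q)) ^ K + Real.log ((x+q)/x) ^ K) / (x+q) := h4
        _ = 2^K * (logPlus (P/(x+q)) ^ K / (x+q)) + 2^K * (Real.log ((x+q)/x) ^ K / (x+q)) := by
            ring
    have hmono := intervalIntegral.integral_mono_on hΛΛ₀ hif hig hpt
    have hsum : (∫ l in Λ..Λ₀,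
          (2^K * (logPlus (P/(l+q)) ^ K / (l+q)) + 2^K * (Real.log ((l+q)/l) ^ K / (l+q))))
        = 2^K * (∫ l in Λ..Λ₀, logPlus (P/(l+q)) ^ K / (l+q))
          + 2^K * (∫ l in Λ..Λ₀, Real.log ((l+q)/l) ^ K / (l+q)) := by
      rw [intervalIntegral.integral_add (hi1.const_mul _) (hi2.const_mul _),
        intervalIntegral.integral_const_mul, intervalIntegral.integral_const_mul]
    have hI1 := I1bound n q P Λ Λ₀ hq hP hΛ hΛΛ₀
    have hI2 := I2bound n q P Λ Λ₀ hq hP hΛ hΛΛ₀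
    have hI2' : (∫ l in Λ..Λ₀, Real.log ((l+q)/l) ^ K / (l+q)) ≤ 2*ck + 1 := by
      have : (2*((n:ℝ)+1))^(n+1) = ((2*(n+1):ℝ))^(n+1) := by push_cast; ring
      rw [hckdef, this]
      exact hI2
    set A := logPlus (P/(Λ+q)) with hA
    have hA0 : 0 ≤ A ^ (n+2) := pow_nonneg (logPlus_nonneg _) _
    have hL0 : 0 ≤ logPlus (Λ₀/(Λ+q)) := logPlus_nonneg _
    have hKK : n + 1 + 1 = n + 2 := by omega
    have hchain : (∫ l in Λ..Λ₀, (logPlus (P/l)) ^ K / (l+q))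
        ≤ 2^K * A^(n+2) + 2^K * (2*ck + 1) := by
      calc (∫ l in Λ..Λ₀, (logPlus (P/l)) ^ K / (l+q))
          ≤ _ := hmono
        _ = 2^K * (∫ l in Λ..Λ₀, logPlus (P/(l+q)) ^ K / (l+q))
            + 2^K * (∫ l in Λ..Λ₀, Real.log ((l+q)/l) ^ K / (l+q)) := hsum
        _ ≤ 2^K * A^(n+2) + 2^K * (2*ck + 1) := by
            apply add_le_add
            · exact mul_le_mul_of_nonneg_left hI1 ht.le
            · exact mul_le_mul_of_nonneg_left hI2' ht.le
    rw [hKK]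
    set L := logPlus (Λ₀/(Λ+q))
    have key : 2^K * A^(n+2) + 2^K * (2*ck + 1)
        < 2^K * (2*ck + 2) * (1 + A^(n+2) + L) := by
      nlinarith [mul_nonneg (mul_nonneg ht.le (by linarith : (0:ℝ) ≤ 2*ck+1)) hA0,
        mul_nonneg (mul_nonneg ht.le (by linarith : (0:ℝ) ≤ 2*ck+2)) hL0]
    calc (∫ l in Λ..Λ₀, (logPlus (P/l)) ^ K / (l+q))
        ≤ 2^K * A^(n+2) + 2^K * (2*ck + 1) := hchain
      _ < 2^K * (2*ck + 2) * (1 + A^(n+2) + L) := key
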